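/- Let (α_k, σ_k), m ≤ k < n, be jobs with 1 ≤ α_k ≤ s and σ_k ≥ 0, and for an ordered vector W let H_{[m,n)}(W) denote the result of applying the pile maps Ψ_{α_m,σ_m}, …, Ψ_{α_{n-1},σ_{n-1}} in order starting from W. Then for every ordered nonnegative vector W, H_{[m,n)}(W) ≤ H_{[m,n)}(0) + |W|_∞·U coordinatewise, where |W|_∞ is the maximum coordinate of W. -/

import Mathlib

/-- The nondecreasing rearrangement operator `R` on vectors of ℝ^s. -/
noncomputable def sortVec {s : ℕ} (v : Fin s → ℝ) : Fin s → ℝ := v ∘ Tuple.sort v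

/-- The all-ones vector `U`. -/
def Uvec (s : ℕ) : Fin s → ℝ := fun _ => 1

/-- `L(α)`: coordinate `i` is `1` if `i ≤ α` and `0` otherwise (indices 0-based,
so `α : Fin s` represents the number of requested servers `α+1 ∈ {1,…,s}`). -/
def Lvec {s : ℕ} (α : Fin s) : Fin s → ℝ := fun i => if i ≤ α then 1 else 0

/-- `S(α, W)`: coordinate `i` is `max (W^α) (W^i)`. -/
def Svec {s : ℕ} (α : Fin s) (W : Fin s → ℝ) : Fin s → ℝ := fun i => max (W α) (W i)

/-- A vector is ordered if its coordinates are nondecreasing and nonnegative. -/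
def IsOrdered {s : ℕ} (W : Fin s → ℝ) : Prop := Monotone W ∧ ∀ i, 0 ≤ W i

/-- The one-step MJSRE map `Φ_{α,σ,τ}(W) = R(S(α,W) + σ·L(α) − τ·U)⁺`. -/
noncomputable def Phi {s : ℕ} (α : Fin s) (σ τ : ℝ) (W : Fin s → ℝ) : Fin s → ℝ :=
  sortVec (fun i => max (Svec α W i + σ * Lvec α i - τ * Uvec s i) 0)

/-- The one-step pile map `Ψ_{α,σ}(W) = R(S(α,W) + σ·L(α))`. -/
noncomputable def Psi {s : ℕ} (α : Fin s) (σ : ℝ) (W : Fin s → ℝ) : Fin s → ℝ :=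
  sortVec (fun i => Svec α W i + σ * Lvec α i)

/-- `pileFrom a σf W m j` is the result `H_{[m, m+j)}(W)` of applying the pile maps
`Ψ_{α_m,σ_m}, …, Ψ_{α_{m+j-1},σ_{m+j-1}}` in order starting from the vector `W`. -/
noncomputable def pileFrom {s : ℕ} (a : ℕ → Fin s) (σf : ℕ → ℝ) (W : Fin s → ℝ) (m : ℕ) :
    ℕ → (Fin s → ℝ)
  | 0 => W
  | j + 1 => Psi (a (m + j)) (σf (m + j)) (pileFrom a σf W m j)

lemma sortVec_le_iff {s : ℕ} (v : Fin s → ℝ) (i : Fin s) (c : ℝ) :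
    sortVec v i ≤ c ↔ (i : ℕ) + 1 ≤ (Finset.univ.filter (fun j => v j ≤ c)).card := by
  set π := Tuple.sort v with hπ
  have hmono : Monotone (v ∘ π) := Tuple.monotone_sort v
  constructor
  · intro h
    have himg : (Finset.Iic i).image π ⊆ Finset.univ.filter (fun j => v j ≤ c) := by
      intro t ht
      simp only [Finset.mem_image, Finset.mem_Iic] at ht
      obtain ⟨j, hj, rfl⟩ := ht
      simp only [Finset.mem_filter, Finset.mem_univ, true_and]
      exact le_trans (hmono hj) h
    calc (i : ℕ) + 1 = (Finset.Iic i).card := by rw [Fin.card_Iic]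
      _ = ((Finset.Iic i).image π).card := (Finset.card_image_of_injective _ π.injective).symm
      _ ≤ _ := Finset.card_le_card himg
  · intro h
    have hcard : (Finset.univ.filter (fun j => v (π j) ≤ c)).card
        = (Finset.univ.filter (fun j => v j ≤ c)).card := by
      apply Finset.card_bij (fun j _ => π j)
      · intro j hj; simp only [Finset.mem_filter, Finset.mem_univ, true_and] at hj ⊢; exact hj
      · intro j₁ _ j₂ _ h; exact π.injective h
      · intro t ht
        simp only [Finset.mem_filter, Finset.mem_univ, true_and] at ht
        exact ⟨π.symm t, by simp [ht], by simp⟩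
    have : ∃ j ∈ Finset.univ.filter (fun j => v (π j) ≤ c), i ≤ j := by
      by_contra hcon
      push_neg at hcon
      have hsub : Finset.univ.filter (fun j => v (π j) ≤ c) ⊆ Finset.Iio i := by
        intro j hj; exact Finset.mem_Iio.2 (lt_of_not_ge fun hle => absurd (hcon j hj) (not_lt.2 hle))
      have := Finset.card_le_card hsub
      rw [Fin.card_Iio, hcard] at this
      omega
    obtain ⟨j, hj, hij⟩ := this
    simp only [Finset.mem_filter, Finset.mem_univ, true_and] at hj
    exact le_trans (hmono hij) hj

lemma sortVec_mono {s : ℕ} {v w : Fin s → ℝ} (h : ∀ j, v j ≤ w j) (i : Fin s) :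
    sortVec v i ≤ sortVec w i := by
  rw [sortVec_le_iff]
  have h1 : sortVec w i ≤ sortVec w i := le_rfl
  rw [sortVec_le_iff] at h1
  refine h1.trans (Finset.card_le_card ?_)
  intro j hj
  simp only [Finset.mem_filter, Finset.mem_univ, true_and] at hj ⊢
  exact (h j).trans hj

lemma sortVec_add_const {s : ℕ} (v : Fin s → ℝ) (c : ℝ) (i : Fin s) :
    sortVec (fun j => v j + c) i = sortVec v i + c := by
  have key : ∀ x : ℝ, sortVec (fun j => v j + c) i ≤ x ↔ sortVec v i + c ≤ x := by
    intro x
    rw [sortVec_le_iff, ← le_sub_iff_add_le, sortVec_le_iff]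
    have : (Finset.univ.filter (fun j => v j + c ≤ x))
        = (Finset.univ.filter (fun j : Fin s => v j ≤ x - c)) := by
      apply Finset.filter_congr; intro j _; simp [le_sub_iff_add_le]
    rw [this]
  exact le_antisymm ((key _).2 le_rfl) ((key _).1 le_rfl)

lemma Psi_mono {s : ℕ} (α : Fin s) (σ : ℝ) {v w : Fin s → ℝ} (h : ∀ j, v j ≤ w j)
    (i : Fin s) : Psi α σ v i ≤ Psi α σ w i := by
  apply sortVec_mono
  intro j
  exact add_le_add (max_le_max (h α) (h j)) le_rfl

lemma Psi_add_const {s : ℕ} (α : Fin s) (σ : ℝ) (v : Fin s → ℝ) (c : ℝ) (i : Fin s) :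
    Psi α σ (fun j => v j + c) i = Psi α σ v i + c := by
  unfold Psi
  have : (fun j => Svec α (fun j => v j + c) j + σ * Lvec α j)
      = fun j => (Svec α v j + σ * Lvec α j) + c := by
    funext j
    simp only [Svec, max_add_add_right]
    ring
  rw [this, sortVec_add_const]

lemma pileFrom_mono {s : ℕ} (a : ℕ → Fin s) (σf : ℕ → ℝ) {V W : Fin s → ℝ}
    (h : ∀ j, V j ≤ W j) (m : ℕ) : ∀ k i, pileFrom a σf V m k i ≤ pileFrom a σf W m k i := by
  intro k
  induction k with
  | zero => exact h
  | succ j ih => exact fun i => Psi_mono _ _ ih i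

lemma pileFrom_add_const {s : ℕ} (a : ℕ → Fin s) (σf : ℕ → ℝ) (V : Fin s → ℝ) (c : ℝ)
    (m : ℕ) : ∀ k i, pileFrom a σf (fun j => V j + c) m k i = pileFrom a σf V m k i + c := by
  intro k
  induction k with
  | zero => intro i; rfl
  | succ j ih =>
    intro i
    show Psi _ _ (pileFrom a σf (fun j => V j + c) m j) i = _
    have heq : pileFrom a σf (fun j => V j + c) m j
        = fun i => pileFrom a σf V m j i + c := funext ih
    rw [heq, Psi_add_const]
    rfl

/-- The pile started from an ordered nonnegative vector `W` is dominated by the pile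
started from `0` plus the constant vector `|W|_∞ · U`:
`H_{[m,n)}(W) ≤ H_{[m,n)}(0) + |W|_∞ · U` coordinatewise. -/
theorem pileFrom_le_pileFrom_zero (s : ℕ) (hs : 0 < s)
    (a : ℕ → Fin s) (σf : ℕ → ℝ) (hσ : ∀ k, 0 ≤ σf k)
    (W : Fin s → ℝ) (hW : IsOrdered W) :
    ∀ (m n : ℕ), m ≤ n →
      ∀ i, pileFrom a σf W m (n - m) i
        ≤ pileFrom a σf 0 m (n - m) i + (⨆ i', W i') * Uvec s i := by
  intro m n _ i
  set M := ⨆ i', W i' with hM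
  have hWM : ∀ j, W j ≤ M := fun j => le_ciSup (Set.Finite.bddAbove (Set.finite_range W)) j
  have h1 : pileFrom a σf W m (n - m) i ≤ pileFrom a σf (fun _ => M) m (n - m) i :=
    pileFrom_mono a σf hWM m (n - m) i
  have h2 : (fun _ : Fin s => M) = fun j => (0 : Fin s → ℝ) j + M := by
    funext j; simp
  rw [h2] at h1
  rw [pileFrom_add_const] at h1
  simpa [Uvec] using h1
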